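/- For every ν in the dual lattice N with ⟨ν, e_i⟩ > 0 for all 1 ≤ i ≤ d and every integer s ≥ 1, there exists exactly one integer k with 0 ≤ k ≤ d such that φ_k(ν) ≤ s < φ_{k+1}(ν). -/

import Mathlib

open scoped BigOperators Classical

namespace QO

/-- The standard pairing `⟨ν, m⟩ = ∑ i, ν i * m i` on `ℚ^d`. -/
def pair (d : ℕ) (ν m : Fin d → ℚ) : ℚ := ∑ i, ν i * m i

/-- `E d lam i` is the `i`-th standard basis vector of `ℚ^d` for `1 ≤ i ≤ d`,
and equals the characteristic exponent `λ_{i-d}` for `d + 1 ≤ i` (1-based indexing). -/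
def E (d : ℕ) (lam : ℕ → Fin d → ℚ) (i : ℕ) : Fin d → ℚ :=
  if 1 ≤ i ∧ i ≤ d then (fun j => if (j : ℕ) = i - 1 then 1 else 0) else lam (i - d)

/-- The lattice `M_j = ℤ^d + ℤλ_1 + ⋯ + ℤλ_j`, as an additive subgroup of `ℚ^d`. -/
def Mlat (d : ℕ) (lam : ℕ → Fin d → ℚ) : ℕ → AddSubgroup (Fin d → ℚ)
  | 0 => AddSubgroup.closure (Set.range fun i : Fin d => (fun j => if j = i then (1 : ℚ) else 0))
  | (j + 1) => Mlat d lam j ⊔ AddSubgroup.closure {lam (j + 1)}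

/-- The dual lattice `N` of `M = M_g`. -/
def Ndual (d g : ℕ) (lam : ℕ → Fin d → ℚ) : Set (Fin d → ℚ) :=
  { ν | ∀ m ∈ Mlat d lam g, ∃ z : ℤ, pair d ν m = (z : ℚ) }

/-- Admissible index sets for `J_k`: `k` indices in `{1, …, d+g}`, at most one of which
exceeds `d`, whose associated vectors are linearly independent over `ℚ`. -/
def IdxOk (d g : ℕ) (lam : ℕ → Fin d → ℚ) (k : ℕ) (I : Finset ℕ) : Prop :=
  I.card = k ∧ I ⊆ Finset.Icc 1 (d + g) ∧ (I.filter fun i => d + 1 ≤ i).card ≤ 1 ∧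
    LinearIndependent ℚ (fun i : {x // x ∈ I} => E d lam i.1)

/-- The set `J_k` of sums `e_{j_1} + ⋯ + e_{j_k}`. -/
def Jset (d g : ℕ) (lam : ℕ → Fin d → ℚ) (k : ℕ) : Set (Fin d → ℚ) :=
  { w | ∃ I : Finset ℕ, IdxOk d g lam k I ∧ w = ∑ i ∈ I, E d lam i }

/-- The set `J_k`, as a finite set. -/
noncomputable def Jfin (d g : ℕ) (lam : ℕ → Fin d → ℚ) (k : ℕ) : Finset (Fin d → ℚ) :=
  ((Finset.Icc 1 (d + g)).powerset.filter fun I => IdxOk d g lam k I).image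
    fun I => ∑ i ∈ I, E d lam i

/-- The support function `ord_{J_k}(ν) = min_{w ∈ J_k} ⟨ν, w⟩`. -/
noncomputable def ordJ (d g : ℕ) (lam : ℕ → Fin d → ℚ) (k : ℕ) (ν : Fin d → ℚ) : ℚ :=
  if h : (Jfin d g lam k).Nonempty then ((Jfin d g lam k).image (pair d ν)).min' (h.image _)
  else 0

/-- `φ_k(ν) = ord_{J_k}(ν) - ord_{J_{k-1}}(ν)` (note `ord_{J_0} = 0`, hence also `φ_0 = 0`). -/
noncomputable def phiJ (d g : ℕ) (lam : ℕ → Fin d → ℚ) (k : ℕ) (ν : Fin d → ℚ) : ℚ :=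
  ordJ d g lam k ν - ordJ d g lam (k - 1) ν

/-- The sort key of the total order `≤_ν` on the indices `1, …, d+g`: sort by the value
`⟨ν, ·⟩`, breaking ties (in particular ties between an `e_i` with `i ≤ d` and a `λ_j`)
by the index, so that `e_i` is placed first. -/
noncomputable def keyIdx (d : ℕ) (lam : ℕ → Fin d → ℚ) (ν : Fin d → ℚ) (i : ℕ) : ℚ ×ₗ ℕ :=
  toLex (pair d ν (E d lam i), i)

/-- The `≤_ν`-least element of a finite set of indices. -/
noncomputable def leastIdx (d : ℕ) (lam : ℕ → Fin d → ℚ) (ν : Fin d → ℚ) (S : Finset ℕ) : ℕ :=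
  if h : S.Nonempty then (ofLex ((S.image (keyIdx d lam ν)).min' (h.image _))).2 else 0

/-- The `≤_ν`-greatest element of a finite set of indices. -/
noncomputable def greatestIdx (d : ℕ) (lam : ℕ → Fin d → ℚ) (ν : Fin d → ℚ)
    (S : Finset ℕ) : ℕ :=
  if h : S.Nonempty then (ofLex ((S.image (keyIdx d lam ν)).max' (h.image _))).2 else 0

/-- The `ℚ`-span of the vectors indexed by `I`. -/
def spanOf (d : ℕ) (lam : ℕ → Fin d → ℚ) (I : Finset ℕ) : Submodule ℚ (Fin d → ℚ) :=
  Submodule.span ℚ ((fun i => E d lam i) '' (I : Set ℕ))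

/-- `n(k)`: the index `n` such that `λ_n` is a summand of `w_k`, and `0` if there is none. -/
noncomputable def nVal (d : ℕ) (I : Finset ℕ) : ℕ :=
  if h : (I.filter fun i => d + 1 ≤ i).Nonempty then (I.filter fun i => d + 1 ≤ i).min' h - d
  else 0

/-- `t(k)`: the least `1 ≤ j ≤ g` with `λ_j ∉ ℓ_k(ν)`, and `g + 1` if there is none. -/
noncomputable def tVal (d g : ℕ) (lam : ℕ → Fin d → ℚ) (I : Finset ℕ) : ℕ :=
  if h : ((Finset.Icc 1 g).filter fun j => lam j ∉ spanOf d lam I).Nonempty then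
    ((Finset.Icc 1 g).filter fun j => lam j ∉ spanOf d lam I).min' h
  else g + 1

/-- `m(k)`: the index `m` with `({e_1, …, e_d} ∩ ℓ_k(ν)) ∖ {summands of w_k} = {e_m}`,
and `0` if this set is empty. -/
noncomputable def mVal (d : ℕ) (lam : ℕ → Fin d → ℚ) (I : Finset ℕ) : ℕ :=
  if h : (((Finset.Icc 1 d).filter fun i => E d lam i ∈ spanOf d lam I) \ I).Nonempty then
    (((Finset.Icc 1 d).filter fun i => E d lam i ∈ spanOf d lam I) \ I).min' h
  else 0

/-- `i(k)`: the `≤_ν`-least index `1 ≤ i ≤ d + g` with `w_k + e_i ∈ J_{k+1}`. -/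
noncomputable def iVal (d g : ℕ) (lam : ℕ → Fin d → ℚ) (ν : Fin d → ℚ) (k : ℕ)
    (I : Finset ℕ) : ℕ :=
  leastIdx d lam ν ((Finset.Icc 1 (d + g)).filter fun i => IdxOk d g lam (k + 1) (insert i I))

/-- One step of the algorithm, from the summands of `w_k` to the summands of `w_{k+1}`:
`a_{k+1} = w_k + e_{i(k)}` and `b_{k+1} = w_k - λ_{n(k)} + λ_{t(k)} + e_{m(k)}`; the
candidate `b_{k+1}` is discarded when `m(k) = 0` or `t(k) = g + 1`, and otherwise
`w_{k+1} = a_{k+1}` exactly when `⟨ν, a_{k+1}⟩ ≤ ⟨ν, b_{k+1}⟩`. -/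
noncomputable def step (d g : ℕ) (lam : ℕ → Fin d → ℚ) (ν : Fin d → ℚ) (k : ℕ)
    (I : Finset ℕ) : Finset ℕ :=
  let a : Finset ℕ := insert (iVal d g lam ν k I) I
  let b : Finset ℕ :=
    insert (mVal d lam I) (insert (d + tVal d g lam I)
      (if nVal d I = 0 then I else I.erase (d + nVal d I)))
  if mVal d lam I = 0 ∨ tVal d g lam I = g + 1 then a
  else if pair d ν (∑ i ∈ a, E d lam i) ≤ pair d ν (∑ i ∈ b, E d lam i) then a else b

/-- The index sets `W ν k` of summands of the algorithm's vectors `w_k`; the vector `w_1`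
is the `≤_ν`-least element of `{e_1, …, e_d, λ_1}`. -/
noncomputable def W (d g : ℕ) (lam : ℕ → Fin d → ℚ) (ν : Fin d → ℚ) : ℕ → Finset ℕ
  | 0 => ∅
  | 1 => {leastIdx d lam ν (insert (d + 1) (Finset.Icc 1 d))}
  | (k + 2) => step d g lam ν (k + 1) (W d g lam ν (k + 1))

/-- The algorithm's vector `w_k`. -/
noncomputable def wVec (d g : ℕ) (lam : ℕ → Fin d → ℚ) (ν : Fin d → ℚ) (k : ℕ) :
    Fin d → ℚ :=
  ∑ i ∈ W d g lam ν k, E d lam i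

/-- `ℓ_k(ν)`: the `ℚ`-span of the summands of `w_k`. -/
noncomputable def ellK (d g : ℕ) (lam : ℕ → Fin d → ℚ) (ν : Fin d → ℚ) (k : ℕ) :
    Submodule ℚ (Fin d → ℚ) :=
  spanOf d lam (W d g lam ν k)

/-- `ℓ_ν^s = span_ℚ{e_j : 1 ≤ j < d + t(k), ⟨ν, e_j⟩ ≤ s}`, where `k` is the index with
`φ_k(ν) ≤ s < φ_{k+1}(ν)`. -/
noncomputable def ellS (d g : ℕ) (lam : ℕ → Fin d → ℚ) (ν : Fin d → ℚ) (s : ℚ) (k : ℕ) :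
    Submodule ℚ (Fin d → ℚ) :=
  Submodule.span ℚ ((fun i => E d lam i) ''
    { i : ℕ | 1 ≤ i ∧ i < d + tVal d g lam (W d g lam ν k) ∧ pair d ν (E d lam i) ≤ s })

/-- `p(k)` (with the convention `λ_0 = 0`). -/
noncomputable def pVal (d g : ℕ) (lam : ℕ → Fin d → ℚ) (ν : Fin d → ℚ) (s : ℚ)
    (k : ℕ) : ℕ :=
  if nVal d (W d g lam ν k) = 0 then
    if h : ((Finset.Icc 0 g).filter fun j =>
        pair d ν (if j = 0 then (0 : Fin d → ℚ) else lam j) ≤ s).Nonempty then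
      ((Finset.Icc 0 g).filter fun j =>
        pair d ν (if j = 0 then (0 : Fin d → ℚ) else lam j) ≤ s).max' h
    else 0
  else
    (insert (nVal d (W d g lam ν k))
      ((Finset.Ioo (nVal d (W d g lam ν k)) (tVal d g lam (W d g lam ν k))).filter fun j =>
        mVal d lam (W d g lam ν k) ≠ 0 ∧
          pair d ν (E d lam (mVal d lam (W d g lam ν k)) - lam (nVal d (W d g lam ν k)) + lam j)
            ≤ s)).max' (Finset.insert_nonempty _ _)

/-- `q_η`: the index of the `≤_ν`-greatest element of `{e_1, …, e_d} ∩ ℓ(η)`, where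
`ℓ(η) = span_ℚ{e_i : η_i ≠ 0}`. -/
noncomputable def qIdx (d : ℕ) (lam : ℕ → Fin d → ℚ) (ν η : Fin d → ℚ) : ℕ :=
  greatestIdx d lam ν ((Finset.Icc 1 d).filter fun i => pair d η (E d lam i) ≠ 0)

section Aux

variable {d g : ℕ} {lam : ℕ → Fin d → ℚ} {ν : Fin d → ℚ}

/-- The pairing as a linear map in the second variable. -/
noncomputable def pairLM (d : ℕ) (ν : Fin d → ℚ) : (Fin d → ℚ) →ₗ[ℚ] ℚ where
  toFun m := pair d ν m
  map_add' a b := by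
    simp [pair, mul_add, Finset.sum_add_distrib]
  map_smul' c a := by
    simp [pair, Finset.mul_sum, mul_left_comm]

lemma pair_add (ν : Fin d → ℚ) (a b : Fin d → ℚ) :
    pair d ν (a + b) = pair d ν a + pair d ν b :=
  (pairLM d ν).map_add a b

lemma pair_sum (ν : Fin d → ℚ) (I : Finset ℕ) (f : ℕ → Fin d → ℚ) :
    pair d ν (∑ i ∈ I, f i) = ∑ i ∈ I, pair d ν (f i) :=
  map_sum (pairLM d ν) f I

lemma mem_Jfin {k : ℕ} {w : Fin d → ℚ} :
    w ∈ Jfin d g lam k ↔ ∃ I : Finset ℕ, IdxOk d g lam k I ∧ w = ∑ i ∈ I, E d lam i := by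
  simp only [Jfin, Finset.mem_image, Finset.mem_filter, Finset.mem_powerset]
  constructor
  · rintro ⟨I, ⟨-, hI⟩, rfl⟩; exact ⟨I, hI, rfl⟩
  · rintro ⟨I, hI, rfl⟩; exact ⟨I, ⟨hI.2.1, hI⟩, rfl⟩

lemma ordJ_le {k : ℕ} {I : Finset ℕ} (hI : IdxOk d g lam k I) :
    ordJ d g lam k ν ≤ pair d ν (∑ i ∈ I, E d lam i) := by
  have hw : (∑ i ∈ I, E d lam i) ∈ Jfin d g lam k := mem_Jfin.2 ⟨I, hI, rfl⟩
  have hne : (Jfin d g lam k).Nonempty := ⟨_, hw⟩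
  rw [ordJ, dif_pos hne]
  exact Finset.min'_le _ _ (Finset.mem_image_of_mem _ hw)

lemma ordJ_attained {k : ℕ} (hne : (Jfin d g lam k).Nonempty) :
    ∃ I : Finset ℕ, IdxOk d g lam k I ∧ ordJ d g lam k ν = pair d ν (∑ i ∈ I, E d lam i) := by
  rw [ordJ, dif_pos hne]
  obtain ⟨w, hw, hmin⟩ := Finset.mem_image.1
    (Finset.min'_mem ((Jfin d g lam k).image (pair d ν)) (hne.image _))
  obtain ⟨I, hI, rfl⟩ := mem_Jfin.1 hw
  exact ⟨I, hI, hmin.symm⟩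

lemma linInd_small {I : Finset ℕ} (hI : I ⊆ Finset.Icc 1 d) :
    LinearIndependent ℚ (fun i : {x // x ∈ I} => E d lam i.1) := by
  have hmem : ∀ i : {x // x ∈ I}, 1 ≤ i.1 ∧ i.1 ≤ d := by
    intro i
    have := hI i.2
    simpa [Finset.mem_Icc] using this
  let f : {x // x ∈ I} → Fin d := fun i => ⟨i.1 - 1, by have := hmem i; omega⟩
  have hfeq : (fun i : {x // x ∈ I} => E d lam i.1) = (Pi.basisFun ℚ (Fin d)) ∘ f := by
    funext i
    have h1 := hmem i
    simp only [E, if_pos h1, Function.comp_apply, Pi.basisFun_apply]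
    funext j
    simp only [Pi.single_apply]
    by_cases hj : (j : ℕ) = i.1 - 1
    · rw [if_pos hj, if_pos (Fin.ext hj)]
    · rw [if_neg hj, if_neg (fun h => hj (by rw [h]))]
  rw [hfeq]
  refine (Pi.basisFun ℚ (Fin d)).linearIndependent.comp f ?_
  intro a b hab
  have h1 := hmem a
  have h2 := hmem b
  have : a.1 - 1 = b.1 - 1 := congrArg Fin.val hab
  exact Subtype.ext (by omega)

lemma Jfin_nonempty {k : ℕ} (hk : k ≤ d) : (Jfin d g lam k).Nonempty := by
  refine ⟨_, mem_Jfin.2 ⟨Finset.Icc 1 k, ⟨?_, ?_, ?_, ?_⟩, rfl⟩⟩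
  · simp [Nat.card_Icc]
  · intro i hi
    simp only [Finset.mem_Icc] at *
    omega
  · have h : (Finset.Icc 1 k).filter (fun i => d + 1 ≤ i) = ∅ := by
      refine Finset.filter_eq_empty_iff.2 ?_
      intro i hi
      simp only [Finset.mem_Icc] at hi
      omega
    rw [h]; simp
  · exact linInd_small (by intro i hi; simp only [Finset.mem_Icc] at *; omega)

lemma linInd_subset {I J : Finset ℕ} (h : I ⊆ J)
    (hJ : LinearIndependent ℚ (fun i : {x // x ∈ J} => E d lam i.1)) :
    LinearIndependent ℚ (fun i : {x // x ∈ I} => E d lam i.1) := by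
  have h2 := hJ.comp (fun x : {x // x ∈ I} => (⟨x.1, h x.2⟩ : {x // x ∈ J}))
    (by intro a b hab; have := congrArg Subtype.val hab; exact Subtype.ext this)
  exact h2

lemma card_le_of_subset_span {I J : Finset ℕ}
    (hli : LinearIndependent ℚ (fun i : {x // x ∈ I} => E d lam i.1))
    (hsub : ∀ i ∈ I, E d lam i ∈ spanOf d lam J) : I.card ≤ J.card := by
  classical
  set V := spanOf d lam J with hV
  have hfin : Module.Finite ℚ V := inferInstance
  have hli' : LinearIndependent ℚ (fun i : {x // x ∈ I} => (⟨E d lam i.1, hsub i.1 i.2⟩ : V)) :=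
    LinearIndependent.of_comp V.subtype hli
  have h1 : I.card ≤ Module.finrank ℚ V := by
    simpa [Fintype.card_coe] using hli'.fintype_card_le_finrank
  have h2 : Module.finrank ℚ V ≤ J.card := by
    have hVeq : V = Submodule.span ℚ ↑(J.image (E d lam)) := by
      rw [hV, spanOf, Finset.coe_image]
    calc Module.finrank ℚ V ≤ (J.image (E d lam)).card := by
          rw [hVeq]; exact finrank_span_finset_le_card _
      _ ≤ J.card := Finset.card_image_le
  omega

lemma exists_not_mem_span {I J : Finset ℕ}
    (hli : LinearIndependent ℚ (fun i : {x // x ∈ I} => E d lam i.1))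
    (hcard : J.card < I.card) :
    ∃ i ∈ I, E d lam i ∉ spanOf d lam J := by
  by_contra h
  push_neg at h
  exact absurd (card_le_of_subset_span hli h) (by omega)

lemma mem_spanOf {I : Finset ℕ} {i : ℕ} (hi : i ∈ I) : E d lam i ∈ spanOf d lam I :=
  Submodule.subset_span ⟨i, by simpa using hi⟩

lemma spanOf_mono {I J : Finset ℕ} (h : I ⊆ J) : spanOf d lam I ≤ spanOf d lam J :=
  Submodule.span_mono (Set.image_mono (by exact_mod_cast h))

lemma linInd_insert {I : Finset ℕ} {a : ℕ}
    (hli : LinearIndependent ℚ (fun i : {x // x ∈ I} => E d lam i.1))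
    (ha : E d lam a ∉ spanOf d lam I) :
    LinearIndependent ℚ (fun i : {x // x ∈ insert a I} => E d lam i.1) := by
  classical
  have haI : a ∉ (I : Set ℕ) := fun h => ha (mem_spanOf (by exact_mod_cast h))
  have hset : LinearIndependent ℚ (fun i : ↥(insert a (I : Set ℕ)) => E d lam i.1) := by
    refine (linearIndepOn_insert haI).2 ⟨?_, ?_⟩
    · exact hli
    · simpa [spanOf] using ha
  have h2 := hset.comp
    (fun x : {x // x ∈ insert a I} => (⟨x.1, by
      rcases Finset.mem_insert.1 x.2 with h | h
      · exact Set.mem_insert_iff.2 (Or.inl h)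
      · exact Set.mem_insert_iff.2 (Or.inr (by exact_mod_cast h))⟩ : ↥(insert a (I : Set ℕ))))
    (by intro u v huv; have := congrArg Subtype.val huv; exact Subtype.ext this)
  exact h2

lemma exchange {k : ℕ} {I I'' : Finset ℕ}
    (hI : IdxOk d g lam k I) (hI'' : IdxOk d g lam (k + 2) I'') :
    ∃ i ∈ I'', IdxOk d g lam (k + 1) (insert i I) ∧ IdxOk d g lam (k + 1) (I''.erase i) := by
  classical
  obtain ⟨hc, hsub, hbig, hli⟩ := hI
  obtain ⟨hc'', hsub'', hbig'', hli''⟩ := hI''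
  -- two elements of I'' outside the span of I
  obtain ⟨i1, hi1, hs1⟩ := exists_not_mem_span hli'' (by omega : I.card < I''.card)
  have hcard2 : (insert i1 I).card < I''.card := by
    have := Finset.card_insert_le i1 I
    omega
  obtain ⟨i2, hi2, hs2'⟩ := exists_not_mem_span hli'' hcard2
  have hs2 : E d lam i2 ∉ spanOf d lam I :=
    fun h => hs2' (spanOf_mono (Finset.subset_insert _ _) h)
  have hne12 : i1 ≠ i2 := by
    intro h
    exact hs2' (h ▸ mem_spanOf (Finset.mem_insert_self i1 I))
  -- choose i : if I has a big element, pick a small one among i1, i2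
  have hchoice : ∃ i, i ∈ I'' ∧ E d lam i ∉ spanOf d lam I ∧
      ((insert i I).filter fun j => d + 1 ≤ j).card ≤ 1 := by
    by_cases hIb : (I.filter fun j => d + 1 ≤ j).card = 0
    · refine ⟨i1, hi1, hs1, ?_⟩
      have : ((insert i1 I).filter fun j => d + 1 ≤ j) ⊆
          insert i1 (I.filter fun j => d + 1 ≤ j) := by
        intro x hx
        rcases Finset.mem_filter.1 hx with ⟨hx1, hx2⟩
        rcases Finset.mem_insert.1 hx1 with h | h
        · simp [h]
        · exact Finset.mem_insert_of_mem (Finset.mem_filter.2 ⟨h, hx2⟩)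
      calc ((insert i1 I).filter fun j => d + 1 ≤ j).card
          ≤ (insert i1 (I.filter fun j => d + 1 ≤ j)).card := Finset.card_le_card this
        _ ≤ (I.filter fun j => d + 1 ≤ j).card + 1 := Finset.card_insert_le _ _
        _ ≤ 1 := by omega
    · -- I already has a big element; i1 or i2 is small
      have hsm : i1 ≤ d ∨ i2 ≤ d := by
        by_contra hcon
        push_neg at hcon
        have h1 : i1 ∈ I''.filter fun j => d + 1 ≤ j := Finset.mem_filter.2 ⟨hi1, by omega⟩
        have h2 : i2 ∈ I''.filter fun j => d + 1 ≤ j := Finset.mem_filter.2 ⟨hi2, by omega⟩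
        have : 2 ≤ (I''.filter fun j => d + 1 ≤ j).card := by
          have := Finset.one_lt_card.2 ⟨i1, h1, i2, h2, hne12⟩
          omega
        omega
      have key : ∀ i, i ∈ I'' → E d lam i ∉ spanOf d lam I → i ≤ d →
          i ∈ I'' ∧ E d lam i ∉ spanOf d lam I ∧
          ((insert i I).filter fun j => d + 1 ≤ j).card ≤ 1 := by
        intro i hiI hiS hid
        refine ⟨hiI, hiS, ?_⟩
        have : ((insert i I).filter fun j => d + 1 ≤ j) = I.filter fun j => d + 1 ≤ j := by
          rw [Finset.filter_insert, if_neg (by omega)]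
        rw [this]
        exact hbig
      rcases hsm with h | h
      · exact ⟨i1, key i1 hi1 hs1 h⟩
      · exact ⟨i2, key i2 hi2 hs2 h⟩
  obtain ⟨i, hiI'', hiS, hifil⟩ := hchoice
  have hiI : i ∉ I := fun h => hiS (mem_spanOf h)
  refine ⟨i, hiI'', ⟨?_, ?_, hifil, linInd_insert hli hiS⟩, ⟨?_, ?_, ?_, ?_⟩⟩
  · rw [Finset.card_insert_of_notMem hiI, hc]
  · intro x hx
    rcases Finset.mem_insert.1 hx with h | h
    · exact h ▸ hsub'' hiI''
    · exact hsub h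
  · rw [Finset.card_erase_of_mem hiI'', hc'']
    omega
  · exact (Finset.erase_subset _ _).trans hsub''
  · calc ((I''.erase i).filter fun j => d + 1 ≤ j).card
        ≤ (I''.filter fun j => d + 1 ≤ j).card :=
          Finset.card_le_card (Finset.filter_subset_filter _ (Finset.erase_subset _ _))
      _ ≤ 1 := hbig''
  · exact linInd_subset (Finset.erase_subset _ _) hli''

lemma ordJ_concave {k : ℕ} (hk : k + 2 ≤ d) :
    2 * ordJ d g lam (k + 1) ν ≤ ordJ d g lam k ν + ordJ d g lam (k + 2) ν := by
  classical
  obtain ⟨I, hIok, hIeq⟩ := ordJ_attained (ν := ν) (Jfin_nonempty (by omega : k ≤ d))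
  obtain ⟨I'', hIok'', hIeq''⟩ := ordJ_attained (ν := ν) (Jfin_nonempty (hk))
  obtain ⟨i, hiI'', hins, hers⟩ := exchange hIok hIok''
  have hiI : i ∉ I := by
    intro h
    have hcard := hins.1
    have hIc := hIok.1
    rw [Finset.insert_eq_self.2 h] at hcard
    omega
  have h1 : ordJ d g lam (k + 1) ν ≤ pair d ν (∑ j ∈ insert i I, E d lam j) := ordJ_le hins
  have h2 : ordJ d g lam (k + 1) ν ≤ pair d ν (∑ j ∈ I''.erase i, E d lam j) := ordJ_le hers
  have hsum1 : pair d ν (∑ j ∈ insert i I, E d lam j) =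
      pair d ν (E d lam i) + pair d ν (∑ j ∈ I, E d lam j) := by
    rw [Finset.sum_insert hiI, pair_add]
  have hsum2 : pair d ν (E d lam i) + pair d ν (∑ j ∈ I''.erase i, E d lam j) =
      pair d ν (∑ j ∈ I'', E d lam j) := by
    rw [← Finset.add_sum_erase _ _ hiI'', pair_add]
  rw [hIeq, hIeq'']
  linarith

lemma phi_mono {k : ℕ} (h1 : 1 ≤ k) (h2 : k + 1 ≤ d) :
    phiJ d g lam k ν ≤ phiJ d g lam (k + 1) ν := by
  obtain ⟨m, rfl⟩ : ∃ m, k = m + 1 := ⟨k - 1, by omega⟩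
  have := ordJ_concave (d := d) (g := g) (lam := lam) (ν := ν) (k := m) (by omega)
  simp only [phiJ, Nat.add_sub_cancel]
  linarith

lemma phi_chain {a b : ℕ} (h1 : 1 ≤ a) (hab : a ≤ b) (hbd : b ≤ d) :
    phiJ d g lam a ν ≤ phiJ d g lam b ν := by
  induction b with
  | zero => omega
  | succ n ih =>
    rcases Nat.lt_or_ge a (n + 1) with h | h
    · exact le_trans (ih (by omega) (by omega)) (phi_mono (by omega) hbd)
    · have : a = n + 1 := by omega
      rw [this]

end Aux

/-- For every `ν ∈ N` with `⟨ν, e_i⟩ > 0` for all `1 ≤ i ≤ d` and every integer `s ≥ 1`,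
there is exactly one integer `0 ≤ k ≤ d` such that `φ_k(ν) ≤ s < φ_{k+1}(ν)` (where
`φ_0 = 0` and `φ_{d+1} = +∞`, so for `k = d` the upper condition is vacuous). -/
theorem statement2 (d g : ℕ) (lam : ℕ → Fin d → ℚ) (hd : 1 ≤ d) (hg : 1 ≤ g)
    (hnn : ∀ j, 1 ≤ j → j ≤ g → ∀ i, 0 ≤ lam j i)
    (hmono : ∀ j, 1 ≤ j → j < g → ∀ i, lam j i ≤ lam (j + 1) i)
    (hnotin : ∀ j, 1 ≤ j → j ≤ g → lam j ∉ Mlat d lam (j - 1))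
    (ν : Fin d → ℚ) (hν : ν ∈ Ndual d g lam)
    (hpos : ∀ i, 1 ≤ i → i ≤ d → 0 < pair d ν (E d lam i))
    (s : ℕ) (hs : 1 ≤ s) :
    ∃! k : ℕ, k ≤ d ∧ phiJ d g lam k ν ≤ (s : ℚ) ∧
      (k < d → (s : ℚ) < phiJ d g lam (k + 1) ν) := by
  classical
  have hphi0 : phiJ d g lam 0 ν = 0 := by simp [phiJ]
  set K := (Finset.range (d + 1)).filter (fun k => phiJ d g lam k ν ≤ (s : ℚ)) with hK
  have h0K : 0 ∈ K := by
    simp only [hK, Finset.mem_filter, Finset.mem_range, hphi0]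
    exact ⟨by omega, by positivity⟩
  have hKne : K.Nonempty := ⟨0, h0K⟩
  set k0 := K.max' hKne with hk0
  have hk0K : k0 ∈ K := K.max'_mem hKne
  have hk0d : k0 ≤ d := by
    have := (Finset.mem_filter.1 hk0K).1
    simp only [Finset.mem_range] at this
    omega
  have hk0le : phiJ d g lam k0 ν ≤ (s : ℚ) := (Finset.mem_filter.1 hk0K).2
  have hnext : k0 < d → (s : ℚ) < phiJ d g lam (k0 + 1) ν := by
    intro hlt
    by_contra hcon
    push_neg at hcon
    have : k0 + 1 ∈ K := by
      simp only [hK, Finset.mem_filter, Finset.mem_range]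
      exact ⟨by omega, hcon⟩
    have := K.le_max' _ this
    omega
  refine ⟨k0, ⟨hk0d, hk0le, hnext⟩, ?_⟩
  rintro k ⟨hkd, hkle, hknext⟩
  rcases lt_trichotomy k k0 with h | h | h
  · exfalso
    have hlt : (s : ℚ) < phiJ d g lam (k + 1) ν := hknext (by omega)
    have hch : phiJ d g lam (k + 1) ν ≤ phiJ d g lam k0 ν :=
      phi_chain (by omega) (by omega) hk0d
    linarith
  · exact h
  · exfalso
    have hlt : (s : ℚ) < phiJ d g lam (k0 + 1) ν := hnext (by omega)
    have hch : phiJ d g lam (k0 + 1) ν ≤ phiJ d g lam k ν :=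
      phi_chain (by omega) (by omega) hkd
    linarith

end QO
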